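/- If X is a finite set of formulas, φ a formula, and a₁,…,aₙ are all atomic programs occurring in X ∪ {φ}, then X globally entails φ (φ is valid in every standard dynamic Odintsov–Wansing model in which all members of X are valid) if and only if the formula [(a₁ ∪ … ∪ aₙ)*](⋀X) → φ is valid in all standard dynamic Odintsov–Wansing models. -/
import Mathlib


mutual
inductive DynProg : Type where
  | atom : ℕ → DynProg
  | seq : DynProg → DynProg → DynProg
  | union : DynProg → DynProg → DynProg
  | star : DynProg → DynProg
  | test : DynForm → DynProg
inductive DynForm : Type where
  | atom : ℕ → DynForm
  | bot  : DynForm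
  | snot : DynForm → DynForm
  | and  : DynForm → DynForm → DynForm
  | or   : DynForm → DynForm → DynForm
  | imp  : DynForm → DynForm → DynForm
  | box  : DynProg → DynForm → DynForm
  | dia  : DynProg → DynForm → DynForm
end

def DynForm.neg (φ : DynForm) : DynForm := .imp φ .bot

def DynForm.biimp (φ ψ : DynForm) : DynForm := .and (.imp φ ψ) (.imp ψ φ)

structure DynModel : Type 1 where
  S : Type
  ne : Nonempty S
  Ra : ℕ → S → S → Prop
  Vp : ℕ → S → Prop
  Vm : ℕ → S → Prop

mutual
def progRel (M : DynModel) : DynProg → M.S → M.S → Prop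
  | .atom a, x, y => M.Ra a x y
  | .seq α β, x, z => ∃ y, progRel M α x y ∧ progRel M β y z
  | .union α β, x, y => progRel M α x y ∨ progRel M β x y
  | .star α, x, y => Relation.ReflTransGen (fun u v => progRel M α u v) x y
  | .test φ, x, y => x = y ∧ dverify M x φ
def dverify (M : DynModel) : M.S → DynForm → Prop
  | x, .atom p => M.Vp p x
  | _, .bot => False
  | x, .snot φ => dfalsify M x φ
  | x, .and φ ψ => dverify M x φ ∧ dverify M x ψ
  | x, .or φ ψ => dverify M x φ ∨ dverify M x ψ
  | x, .imp φ ψ => dverify M x φ → dverify M x ψ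
  | x, .box α φ => ∀ y, progRel M α x y → dverify M y φ
  | x, .dia α φ => ∃ y, progRel M α x y ∧ dverify M y φ
def dfalsify (M : DynModel) : M.S → DynForm → Prop
  | x, .atom p => M.Vm p x
  | _, .bot => True
  | x, .snot φ => dverify M x φ
  | x, .and φ ψ => dfalsify M x φ ∨ dfalsify M x ψ
  | x, .or φ ψ => dfalsify M x φ ∧ dfalsify M x ψ
  | x, .imp φ ψ => dverify M x φ ∧ dfalsify M x ψ
  | x, .box α φ => ∃ y, progRel M α x y ∧ dfalsify M y φ
  | x, .dia α φ => ∀ y, progRel M α x y → dfalsify M y φ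
end

def validIn (M : DynModel) (φ : DynForm) : Prop := ∀ x : M.S, dverify M x φ

def DynValid (φ : DynForm) : Prop := ∀ M : DynModel, validIn M φ

mutual
def progAtoms : DynProg → Finset ℕ
  | .atom a => {a}
  | .seq α β => progAtoms α ∪ progAtoms β
  | .union α β => progAtoms α ∪ progAtoms β
  | .star α => progAtoms α
  | .test φ => formAtoms φ
def formAtoms : DynForm → Finset ℕ
  | .atom _ => ∅
  | .bot => ∅
  | .snot φ => formAtoms φ
  | .and φ ψ => formAtoms φ ∪ formAtoms ψ
  | .or φ ψ => formAtoms φ ∪ formAtoms ψ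
  | .imp φ ψ => formAtoms φ ∪ formAtoms ψ
  | .box α φ => progAtoms α ∪ formAtoms φ
  | .dia α φ => progAtoms α ∪ formAtoms φ
end

/-- the program a₁ ∪ … ∪ aₙ for a nonempty list a :: rest of atomic programs -/
def unionList (a : ℕ) (rest : List ℕ) : DynProg :=
  rest.foldl (fun p b => .union p (.atom b)) (.atom a)

def conjList : List DynForm → DynForm
  | [] => DynForm.neg .bot
  | ψ :: rest => .and ψ (conjList rest)

theorem unionList_rel (M : DynModel) (a : ℕ) (rest : List ℕ) (u v : M.S) :
    progRel M (unionList a rest) u v ↔ ∃ b ∈ a :: rest, M.Ra b u v := by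
  suffices h : ∀ (rest : List ℕ) (p : DynProg),
      progRel M (rest.foldl (fun p b => .union p (.atom b)) p) u v ↔
        progRel M p u v ∨ ∃ b ∈ rest, M.Ra b u v by
    simpa [unionList, progRel] using h rest (.atom a)
  intro rest
  induction rest with
  | nil => simp
  | cons b rest ih =>
    intro p
    simp only [List.foldl_cons, ih, progRel, List.mem_cons]
    constructor
    · rintro ((h | h) | ⟨c, hc, hr⟩)
      · exact Or.inl h
      · exact Or.inr ⟨b, Or.inl rfl, h⟩
      · exact Or.inr ⟨c, Or.inr hc, hr⟩
    · rintro (h | ⟨c, (rfl | hc), hr⟩)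
      · exact Or.inl (Or.inl h)
      · exact Or.inl (Or.inr hr)
      · exact Or.inr ⟨c, hc, hr⟩

theorem progClosed (M : DynModel) (L : List ℕ) (P : M.S → Prop)
    (hcl : ∀ b ∈ L, ∀ y z, P y → M.Ra b y z → P z) :
    ∀ (α : DynProg), (∀ b, b ∈ progAtoms α → b ∈ L) →
      ∀ y z, P y → progRel M α y z → P z
  | .atom b, h, y, z, hy, hr => hcl b (h b (by simp [progAtoms])) y z hy hr
  | .seq α β, h, y, z, hy, hr => by
    simp only [progRel] at hr
    obtain ⟨w, h1, h2⟩ := hr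
    exact progClosed M L P hcl β (fun b hb => h b (by simp [progAtoms, hb])) w z
      (progClosed M L P hcl α (fun b hb => h b (by simp [progAtoms, hb])) y w hy h1) h2
  | .union α β, h, y, z, hy, hr => by
    simp only [progRel] at hr
    rcases hr with hr | hr
    · exact progClosed M L P hcl α (fun b hb => h b (by simp [progAtoms, hb])) y z hy hr
    · exact progClosed M L P hcl β (fun b hb => h b (by simp [progAtoms, hb])) y z hy hr
  | .star α, h, y, z, hy, hr => by
    simp only [progRel] at hr
    induction hr with
    | refl => exact hy
    | tail _ hbc ih =>
      exact progClosed M L P hcl α (fun b hb => h b (by simpa [progAtoms] using hb)) _ _ ih hbc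
  | .test ψ, h, y, z, hy, hr => by
    simp only [progRel] at hr
    exact hr.1 ▸ hy

def DynModel.restrict (M : DynModel) (P : M.S → Prop) (hne : ∃ y, P y) : DynModel where
  S := {y : M.S // P y}
  ne := ⟨⟨hne.choose, hne.choose_spec⟩⟩
  Ra b y z := M.Ra b y.1 z.1
  Vp p y := M.Vp p y.1
  Vm p y := M.Vm p y.1

mutual
theorem progRel_restrict (M : DynModel) (L : List ℕ) (P : M.S → Prop) (hne : ∃ y, P y)
    (hcl : ∀ b ∈ L, ∀ y z, P y → M.Ra b y z → P z)
    (α : DynProg) (hα : ∀ b, b ∈ progAtoms α → b ∈ L)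
    (y z : (M.restrict P hne).S) :
    progRel (M.restrict P hne) α y z ↔ progRel M α y.1 z.1 := by
  match α with
  | .atom b =>
    simp only [progRel]
    exact Iff.rfl
  | .seq α β =>
    simp only [progRel]
    constructor
    · rintro ⟨w, h1, h2⟩
      exact ⟨w.1, (progRel_restrict M L P hne hcl α (fun b hb => hα b (by simp [progAtoms, hb])) y w).mp h1,
        (progRel_restrict M L P hne hcl β (fun b hb => hα b (by simp [progAtoms, hb])) w z).mp h2⟩
    · rintro ⟨w, h1, h2⟩
      have hPw : P w := progClosed M L P hcl α (fun b hb => hα b (by simp [progAtoms, hb])) y.1 w y.2 h1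
      exact ⟨⟨w, hPw⟩, (progRel_restrict M L P hne hcl α (fun b hb => hα b (by simp [progAtoms, hb])) y ⟨w, hPw⟩).mpr h1,
        (progRel_restrict M L P hne hcl β (fun b hb => hα b (by simp [progAtoms, hb])) ⟨w, hPw⟩ z).mpr h2⟩
  | .union α β =>
    simp only [progRel]
    rw [progRel_restrict M L P hne hcl α (fun b hb => hα b (by simp [progAtoms, hb])) y z,
      progRel_restrict M L P hne hcl β (fun b hb => hα b (by simp [progAtoms, hb])) y z]
  | .star α =>
    have hα' : ∀ b, b ∈ progAtoms α → b ∈ L := fun b hb => hα b (by simpa [progAtoms] using hb)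
    simp only [progRel]
    constructor
    · intro hr
      induction hr with
      | refl => exact Relation.ReflTransGen.refl
      | tail _ hbc ih =>
        exact Relation.ReflTransGen.tail ih
          ((progRel_restrict M L P hne hcl α hα' _ _).mp hbc)
    · intro hr
      suffices h : ∀ w, Relation.ReflTransGen (fun u v => progRel M α u v) y.1 w →
          ∀ hw : P w, Relation.ReflTransGen (fun u v => progRel (M.restrict P hne) α u v) y ⟨w, hw⟩ by
        have := h z.1 hr z.2
        exact this
      intro w hw
      induction hw with
      | refl => intro h1; exact Relation.ReflTransGen.refl
      | @tail b c hyb hbc ih =>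
        intro hPc
        have hPb : P b := progClosed M L P hcl (.star α) hα y.1 b y.2 (by simpa [progRel] using hyb)
        exact Relation.ReflTransGen.tail (ih hPb)
          ((progRel_restrict M L P hne hcl α hα' ⟨b, hPb⟩ ⟨c, hPc⟩).mpr hbc)
  | .test ψ =>
    simp only [progRel]
    rw [dverify_restrict M L P hne hcl ψ (fun b hb => hα b (by simpa [progAtoms] using hb)) y]
    constructor
    · rintro ⟨rfl, h⟩; exact ⟨rfl, h⟩
    · rintro ⟨h1, h2⟩; exact ⟨Subtype.ext h1, h2⟩

theorem dverify_restrict (M : DynModel) (L : List ℕ) (P : M.S → Prop) (hne : ∃ y, P y)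
    (hcl : ∀ b ∈ L, ∀ y z, P y → M.Ra b y z → P z)
    (φ : DynForm) (hφ : ∀ b, b ∈ formAtoms φ → b ∈ L)
    (y : (M.restrict P hne).S) :
    dverify (M.restrict P hne) y φ ↔ dverify M y.1 φ := by
  match φ with
  | .atom p => simp only [dverify]; exact Iff.rfl
  | .bot => simp only [dverify]
  | .snot ψ =>
    simp only [dverify]
    exact dfalsify_restrict M L P hne hcl ψ (fun b hb => hφ b (by simpa [formAtoms] using hb)) y
  | .and ψ χ =>
    simp only [dverify]
    rw [dverify_restrict M L P hne hcl ψ (fun b hb => hφ b (by simp [formAtoms, hb])) y,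
      dverify_restrict M L P hne hcl χ (fun b hb => hφ b (by simp [formAtoms, hb])) y]
  | .or ψ χ =>
    simp only [dverify]
    rw [dverify_restrict M L P hne hcl ψ (fun b hb => hφ b (by simp [formAtoms, hb])) y,
      dverify_restrict M L P hne hcl χ (fun b hb => hφ b (by simp [formAtoms, hb])) y]
  | .imp ψ χ =>
    simp only [dverify]
    rw [dverify_restrict M L P hne hcl ψ (fun b hb => hφ b (by simp [formAtoms, hb])) y,
      dverify_restrict M L P hne hcl χ (fun b hb => hφ b (by simp [formAtoms, hb])) y]
  | .box α ψ =>
    have hα : ∀ b, b ∈ progAtoms α → b ∈ L := fun b hb => hφ b (by simp [formAtoms, hb])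
    have hψ : ∀ b, b ∈ formAtoms ψ → b ∈ L := fun b hb => hφ b (by simp [formAtoms, hb])
    simp only [dverify]
    constructor
    · intro h w hr
      have hPw : P w := progClosed M L P hcl α hα y.1 w y.2 hr
      exact (dverify_restrict M L P hne hcl ψ hψ ⟨w, hPw⟩).mp
        (h ⟨w, hPw⟩ ((progRel_restrict M L P hne hcl α hα y ⟨w, hPw⟩).mpr hr))
    · intro h w hr
      exact (dverify_restrict M L P hne hcl ψ hψ w).mpr
        (h w.1 ((progRel_restrict M L P hne hcl α hα y w).mp hr))
  | .dia α ψ =>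
    have hα : ∀ b, b ∈ progAtoms α → b ∈ L := fun b hb => hφ b (by simp [formAtoms, hb])
    have hψ : ∀ b, b ∈ formAtoms ψ → b ∈ L := fun b hb => hφ b (by simp [formAtoms, hb])
    simp only [dverify]
    constructor
    · rintro ⟨w, hr, h⟩
      exact ⟨w.1, (progRel_restrict M L P hne hcl α hα y w).mp hr,
        (dverify_restrict M L P hne hcl ψ hψ w).mp h⟩
    · rintro ⟨w, hr, h⟩
      have hPw : P w := progClosed M L P hcl α hα y.1 w y.2 hr
      exact ⟨⟨w, hPw⟩, (progRel_restrict M L P hne hcl α hα y ⟨w, hPw⟩).mpr hr,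
        (dverify_restrict M L P hne hcl ψ hψ ⟨w, hPw⟩).mpr h⟩

theorem dfalsify_restrict (M : DynModel) (L : List ℕ) (P : M.S → Prop) (hne : ∃ y, P y)
    (hcl : ∀ b ∈ L, ∀ y z, P y → M.Ra b y z → P z)
    (φ : DynForm) (hφ : ∀ b, b ∈ formAtoms φ → b ∈ L)
    (y : (M.restrict P hne).S) :
    dfalsify (M.restrict P hne) y φ ↔ dfalsify M y.1 φ := by
  match φ with
  | .atom p => simp only [dfalsify]; exact Iff.rfl
  | .bot => simp only [dfalsify]
  | .snot ψ =>
    simp only [dfalsify]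
    exact dverify_restrict M L P hne hcl ψ (fun b hb => hφ b (by simpa [formAtoms] using hb)) y
  | .and ψ χ =>
    simp only [dfalsify]
    rw [dfalsify_restrict M L P hne hcl ψ (fun b hb => hφ b (by simp [formAtoms, hb])) y,
      dfalsify_restrict M L P hne hcl χ (fun b hb => hφ b (by simp [formAtoms, hb])) y]
  | .or ψ χ =>
    simp only [dfalsify]
    rw [dfalsify_restrict M L P hne hcl ψ (fun b hb => hφ b (by simp [formAtoms, hb])) y,
      dfalsify_restrict M L P hne hcl χ (fun b hb => hφ b (by simp [formAtoms, hb])) y]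
  | .imp ψ χ =>
    simp only [dfalsify]
    rw [dverify_restrict M L P hne hcl ψ (fun b hb => hφ b (by simp [formAtoms, hb])) y,
      dfalsify_restrict M L P hne hcl χ (fun b hb => hφ b (by simp [formAtoms, hb])) y]
  | .box α ψ =>
    have hα : ∀ b, b ∈ progAtoms α → b ∈ L := fun b hb => hφ b (by simp [formAtoms, hb])
    have hψ : ∀ b, b ∈ formAtoms ψ → b ∈ L := fun b hb => hφ b (by simp [formAtoms, hb])
    simp only [dfalsify]
    constructor
    · rintro ⟨w, hr, h⟩
      exact ⟨w.1, (progRel_restrict M L P hne hcl α hα y w).mp hr,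
        (dfalsify_restrict M L P hne hcl ψ hψ w).mp h⟩
    · rintro ⟨w, hr, h⟩
      have hPw : P w := progClosed M L P hcl α hα y.1 w y.2 hr
      exact ⟨⟨w, hPw⟩, (progRel_restrict M L P hne hcl α hα y ⟨w, hPw⟩).mpr hr,
        (dfalsify_restrict M L P hne hcl ψ hψ ⟨w, hPw⟩).mpr h⟩
  | .dia α ψ =>
    have hα : ∀ b, b ∈ progAtoms α → b ∈ L := fun b hb => hφ b (by simp [formAtoms, hb])
    have hψ : ∀ b, b ∈ formAtoms ψ → b ∈ L := fun b hb => hφ b (by simp [formAtoms, hb])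
    simp only [dfalsify]
    constructor
    · intro h w hr
      have hPw : P w := progClosed M L P hcl α hα y.1 w y.2 hr
      exact (dfalsify_restrict M L P hne hcl ψ hψ ⟨w, hPw⟩).mp
        (h ⟨w, hPw⟩ ((progRel_restrict M L P hne hcl α hα y ⟨w, hPw⟩).mpr hr))
    · intro h w hr
      exact (dfalsify_restrict M L P hne hcl ψ hψ w).mpr
        (h w.1 ((progRel_restrict M L P hne hcl α hα y w).mp hr))
end

theorem conjList_iff (M : DynModel) (y : M.S) (X : List DynForm) :
    dverify M y (conjList X) ↔ ∀ ψ ∈ X, dverify M y ψ := by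
  induction X with
  | nil => simp [conjList, DynForm.neg, dverify]
  | cons ψ X ih => simp [conjList, dverify, ih]

theorem stmt18 (X : List DynForm) (φ : DynForm) (a : ℕ) (rest : List ℕ)
    (hatoms : ∀ b : ℕ, b ∈ a :: rest ↔ ((∃ ψ ∈ X, b ∈ formAtoms ψ) ∨ b ∈ formAtoms φ)) :
    (∀ M : DynModel, (∀ ψ ∈ X, validIn M ψ) → validIn M φ) ↔
      DynValid (.imp (.box (.star (unionList a rest)) (conjList X)) φ) := by
  constructor
  · intro hglob M x
    simp only [dverify]
    intro hbox
    set L := a :: rest with hL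
    set P : M.S → Prop := fun y => progRel M (.star (unionList a rest)) x y with hP
    have hne : ∃ y, P y := ⟨x, by simp only [hP, progRel]; exact Relation.ReflTransGen.refl⟩
    have hcl : ∀ b ∈ L, ∀ y z, P y → M.Ra b y z → P z := by
      intro b hb y z hy hr
      simp only [hP, progRel] at hy ⊢
      exact Relation.ReflTransGen.tail hy ((unionList_rel M a rest y z).mpr ⟨b, hb, hr⟩)
    have hvalid : ∀ ψ ∈ X, validIn (M.restrict P hne) ψ := by
      intro ψ hψ y
      rw [dverify_restrict M L P hne hcl ψ (fun b hb => (hatoms b).mpr (Or.inl ⟨ψ, hψ, hb⟩)) y]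
      exact (conjList_iff M y.1 X).mp (hbox y.1 y.2) ψ hψ
    have hφ := hglob (M.restrict P hne) hvalid ⟨x, by simp only [hP, progRel]; exact Relation.ReflTransGen.refl⟩
    exact (dverify_restrict M L P hne hcl φ (fun b hb => (hatoms b).mpr (Or.inr hb)) _).mp hφ
  · intro hval M hX x
    have h := hval M x
    simp only [dverify] at h
    apply h
    intro y hy
    exact (conjList_iff M y X).mpr (fun ψ hψ => hX ψ hψ y)
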